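/- Let X be a compact topological space and let A be a norm-bounded subset of C(X) with the interchangeable double limits property: for every sequence (f_n) in A and every sequence (x_m) in X, lim_n lim_m f_n(x_m) = lim_m lim_n f_n(x_m) whenever both iterated limits exist. Then conv(A), the convex hull of A, also has the interchangeable double limits property. -/

import Mathlib

open Filter Topology

/-- A set `A` of continuous functions on `X` has the interchangeable double
limits property if for all sequences `(f_n) ⊆ A` and `(x_m) ⊆ X`, the two
iterated limits agree whenever both exist. -/
def InterchangeableDoubleLimits {X : Type*} [TopologicalSpace X] (A : Set C(X, ℝ)) : Prop :=
  ∀ f : ℕ → C(X, ℝ), (∀ n, f n ∈ A) → ∀ x : ℕ → X,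
    ∀ y z : ℕ → ℝ, ∀ L₁ L₂ : ℝ,
      (∀ n, Tendsto (fun m => f n (x m)) atTop (𝓝 (y n))) →
      Tendsto y atTop (𝓝 L₁) →
      (∀ m, Tendsto (fun n => f n (x m)) atTop (𝓝 (z m))) →
      Tendsto z atTop (𝓝 L₂) →
      L₁ = L₂


open MeasureTheory

namespace IDLAux

noncomputable def before {β : Type*} (F : Finset β) (enc : β → ℕ) (b : β) : Finset β :=
  F.filter (fun b' => enc b' < enc b)

lemma straddle {β : Type*} (F : Finset β) (c : β → ℝ) (enc : β → ℕ)
    (hinj : Set.InjOn enc F)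
    (hc : ∀ b ∈ F, 0 ≤ c b) {a s : ℝ} (ha : a ≤ s) (hs : s < a + ∑ b ∈ F, c b) :
    ∃ b ∈ F, a + ∑ b' ∈ before F enc b, c b' ≤ s ∧
      s < a + ∑ b' ∈ before F enc b, c b' + c b := by
  classical
  induction F using Finset.strongInduction generalizing a with
  | _ F ih =>
    have hFne : F.Nonempty := by
      by_contra h
      rw [Finset.not_nonempty_iff_eq_empty] at h
      subst h
      simp at hs
      linarith
    obtain ⟨b0, hb0F, hb0min⟩ := F.exists_min_image enc hFne
    by_cases hcase : s < a + c b0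
    · have hempty : before F enc b0 = ∅ := by
        rw [Finset.eq_empty_iff_forall_notMem]
        intro b' hb'
        rw [before, Finset.mem_filter] at hb'
        exact absurd hb'.2 (not_lt.mpr (hb0min b' hb'.1))
      exact ⟨b0, hb0F, by rw [hempty]; simpa using ha, by rw [hempty]; simpa using hcase⟩
    · push_neg at hcase
      have hsub : F.erase b0 ⊂ F := Finset.erase_ssubset hb0F
      have hsum : ∑ b ∈ F, c b = c b0 + ∑ b ∈ F.erase b0, c b := by
        rw [Finset.add_sum_erase _ _ hb0F]
      obtain ⟨b, hbF, h1, h2⟩ := ih (F.erase b0) hsub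
        (hinj.mono (fun x hx => Finset.mem_of_mem_erase hx))
        (fun b hb => hc b (Finset.mem_of_mem_erase hb)) (a := a + c b0) hcase
        (by rw [hsum] at hs; linarith)
      have hbF' : b ∈ F := Finset.mem_of_mem_erase hbF
      have hbne : b ≠ b0 := Finset.ne_of_mem_erase hbF
      have hencb : enc b0 < enc b := by
        rcases lt_or_eq_of_le (hb0min b hbF') with h | h
        · exact h
        · exact absurd (hinj hb0F hbF' h) (Ne.symm hbne)
      have hb0notin : b0 ∉ before (F.erase b0) enc b := by
        rw [before, Finset.mem_filter]
        rintro ⟨hmem, -⟩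
        exact absurd rfl (Finset.ne_of_mem_erase hmem)
      have hbefore : before F enc b = insert b0 (before (F.erase b0) enc b) := by
        ext b'
        simp only [before, Finset.mem_insert, Finset.mem_filter, Finset.mem_erase]
        constructor
        · rintro ⟨hb'F, hb'lt⟩
          by_cases hb'b0 : b' = b0
          · exact Or.inl hb'b0
          · exact Or.inr ⟨⟨hb'b0, hb'F⟩, hb'lt⟩
        · rintro (rfl | ⟨⟨_, hb'F⟩, hb'lt⟩)
          · exact ⟨hb0F, hencb⟩
          · exact ⟨hb'F, hb'lt⟩
      have hsumb : ∑ b' ∈ before F enc b, c b'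
          = c b0 + ∑ b' ∈ before (F.erase b0) enc b, c b' := by
        rw [hbefore, Finset.sum_insert hb0notin]
      exact ⟨b, hbF', by rw [hsumb]; linarith, by rw [hsumb]; linarith⟩

lemma straddle_unique {β : Type*} (F : Finset β) (c : β → ℝ) (enc : β → ℕ)
    (hinj : Set.InjOn enc F)
    (hc : ∀ b ∈ F, 0 ≤ c b) {a s : ℝ} {b₁ b₂ : β} (hb₁ : b₁ ∈ F) (hb₂ : b₂ ∈ F)
    (h₁l : a + ∑ b' ∈ before F enc b₁, c b' ≤ s)
    (h₁r : s < a + ∑ b' ∈ before F enc b₁, c b' + c b₁)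
    (h₂l : a + ∑ b' ∈ before F enc b₂, c b' ≤ s)
    (h₂r : s < a + ∑ b' ∈ before F enc b₂, c b' + c b₂) : b₁ = b₂ := by
  classical
  by_contra hne
  -- wlog enc b₁ < enc b₂
  have key : ∀ u v : β, u ∈ F → v ∈ F → enc u < enc v →
      (a + ∑ b' ∈ before F enc u, c b' ≤ s) → (s < a + ∑ b' ∈ before F enc u, c b' + c u) →
      (a + ∑ b' ∈ before F enc v, c b' ≤ s) → False := by
    intro u v huF hvF huv _ hur hvl
    have hsubset : insert u (before F enc u) ⊆ before F enc v := by
      intro b' hb'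
      rw [Finset.mem_insert] at hb'
      rcases hb' with rfl | hb'
      · rw [before, Finset.mem_filter]; exact ⟨huF, huv⟩
      · rw [before, Finset.mem_filter] at hb' ⊢
        exact ⟨hb'.1, hb'.2.trans huv⟩
    have hunotin : u ∉ before F enc u := by
      rw [before, Finset.mem_filter]; rintro ⟨-, h⟩; exact lt_irrefl _ h
    have hle : ∑ b' ∈ before F enc u, c b' + c u ≤ ∑ b' ∈ before F enc v, c b' := by
      have := Finset.sum_le_sum_of_subset_of_nonneg hsubset
        (fun b' hb' _ => hc b' (Finset.mem_filter.mp hb').1)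
      rwa [Finset.sum_insert hunotin, add_comm (c u)] at this
    linarith
  rcases lt_trichotomy (enc b₁) (enc b₂) with h | h | h
  · exact key b₁ b₂ hb₁ hb₂ h h₁l h₁r h₂l
  · exact hne (hinj hb₁ hb₂ h)
  · exact key b₂ b₁ hb₂ hb₁ h h₂l h₂r h₁l

/-- Two reals with equal `Nat.floor` of `y * 2^t` (both nonneg shifted) differ by ≤ 2⁻ᵗ. -/
lemma osc_of_floor_eq {y y' : ℝ} (hy : 0 ≤ y) (hy' : 0 ≤ y') (t : ℕ)
    (h : ⌊y * 2^t⌋₊ = ⌊y' * 2^t⌋₊) : |y - y'| ≤ (2:ℝ)⁻¹ ^ t := by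
  have h2t : (0:ℝ) < 2^t := by positivity
  have h1 : (⌊y * 2^t⌋₊ : ℝ) ≤ y * 2^t := Nat.floor_le (by positivity)
  have h2 : y * 2^t < ⌊y * 2^t⌋₊ + 1 := Nat.lt_floor_add_one _
  have h3 : (⌊y' * 2^t⌋₊ : ℝ) ≤ y' * 2^t := Nat.floor_le (by positivity)
  have h4 : y' * 2^t < ⌊y' * 2^t⌋₊ + 1 := Nat.lt_floor_add_one _
  rw [h] at h1 h2
  have goal : |y - y'| * 2^t ≤ 1 := by
    have habs : |(y - y') * 2^t| ≤ 1 := by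
      rw [abs_le]; constructor <;> nlinarith
    rwa [abs_mul, abs_of_pos h2t] at habs
  calc |y - y'| = |y - y'| * 2^t / 2^t := by field_simp
  _ ≤ 1 / 2^t := by gcongr
  _ = (2:ℝ)⁻¹ ^ t := by rw [inv_pow]; ring

section Defs
variable (r : ℝ) (P : ℕ → ℕ → ℝ)

noncomputable def encF {t : ℕ} (u : Fin (t+1) → ℕ) : ℕ := Encodable.encode (List.ofFn u)

lemma encF_inj {t : ℕ} : Function.Injective (@encF t) := fun u v h => by
  have := Encodable.encode_injective h
  exact List.ofFn_injective this

noncomputable def idxF (b : ℕ → ℝ) (t : ℕ) : Fin (t+1) → ℕ :=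
  fun i => ⌊(b i + (r+1)) * 2^t⌋₊

noncomputable def KbN (t : ℕ) : ℕ := ⌊(2*r+2) * 2^t⌋₊

noncomputable def Rt (t : ℕ) : Finset (Fin (t+1) → ℕ) :=
  Fintype.piFinset (fun _ => Finset.range (KbN r t + 1))

def parF {t : ℕ} (u : Fin (t+2) → ℕ) : Fin (t+1) → ℕ := fun i => u i.castSucc / 2

def Bset : Set (ℕ → ℝ) := closure (Set.range P)

noncomputable def pieceS (t : ℕ) (u : Fin (t+1) → ℕ) : Set (ℕ → ℝ) :=
  {b | b ∈ Bset P ∧ idxF r b t = u}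

variable {r P}

lemma Bset_bound (hP : ∀ t i, |P t i| ≤ r) {b : ℕ → ℝ} (hb : b ∈ Bset P) (i : ℕ) :
    |b i| ≤ r := by
  have hclosed : IsClosed {f : ℕ → ℝ | ∀ i, |f i| ≤ r} := by
    have : {f : ℕ → ℝ | ∀ i, |f i| ≤ r} = Set.pi Set.univ (fun i => {y : ℝ | |y| ≤ r}) := by
      ext f; simp [Set.mem_pi]
    rw [this]
    exact isClosed_set_pi (fun i _ => isClosed_le (by continuity) continuous_const)
  have hsub : Bset P ⊆ {f : ℕ → ℝ | ∀ i, |f i| ≤ r} :=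
    closure_minimal (by rintro f ⟨t, rfl⟩; exact fun i => hP t i) hclosed
  exact hsub hb i

lemma idxF_mem_Rt (hr : 0 ≤ r) {b : ℕ → ℝ} (hb : ∀ i, |b i| ≤ r) (t : ℕ) :
    idxF r b t ∈ Rt r t := by
  rw [Rt, Fintype.mem_piFinset]
  intro i
  rw [Finset.mem_range, Nat.lt_succ_iff, idxF, KbN]
  apply Nat.floor_le_floor
  have := (abs_le.mp (hb i)).2
  have h2t : (0:ℝ) < 2^t := by positivity
  nlinarith

lemma floor_half_aux (x : ℝ) (t : ℕ) : ⌊x * 2^(t+1)⌋₊ / 2 = ⌊x * 2^t⌋₊ := by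
  rw [← Nat.floor_div_natCast (x * 2^(t+1)) 2]
  congr 1
  push_cast
  rw [pow_succ]; ring

lemma parF_idxF {b : ℕ → ℝ} (t : ℕ) : parF (idxF r b (t+1)) = idxF r b t := by
  funext i
  show ⌊(b i.castSucc + (r+1)) * 2^(t+1)⌋₊ / 2 = ⌊(b i + (r+1)) * 2^t⌋₊
  rw [show ((i.castSucc : Fin (t+2)) : ℕ) = (i : ℕ) from rfl]
  exact floor_half_aux _ t

lemma parF_mem_Rt {t : ℕ} {u : Fin (t+2) → ℕ} (hu : u ∈ Rt r (t+1)) :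
    parF u ∈ Rt r t := by
  rw [Rt, Fintype.mem_piFinset] at hu ⊢
  intro i
  have h1 := hu i.castSucc
  rw [Finset.mem_range, Nat.lt_succ_iff] at h1 ⊢
  have hK : KbN r (t+1) / 2 = KbN r t := floor_half_aux _ t
  calc parF u i = u i.castSucc / 2 := rfl
  _ ≤ KbN r (t+1) / 2 := Nat.div_le_div_right h1
  _ = KbN r t := hK

lemma pieceS_osc (hP : ∀ t i, |P t i| ≤ r) (hr : 0 ≤ r) {t : ℕ} {u : Fin (t+1) → ℕ}
    {b b' : ℕ → ℝ} (hb : b ∈ pieceS r P t u) (hb' : b' ∈ pieceS r P t u)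
    {i : ℕ} (hi : i ≤ t) : |b i - b' i| ≤ (2:ℝ)⁻¹ ^ t := by
  obtain ⟨hbB, hbI⟩ := hb
  obtain ⟨hb'B, hb'I⟩ := hb'
  have hbi : |b i| ≤ r := Bset_bound hP hbB i
  have hb'i : |b' i| ≤ r := Bset_bound hP hb'B i
  have hfin : (⟨i, Nat.lt_succ_of_le hi⟩ : Fin (t+1)) = ⟨i, Nat.lt_succ_of_le hi⟩ := rfl
  have heq : ⌊(b i + (r+1)) * 2^t⌋₊ = ⌊(b' i + (r+1)) * 2^t⌋₊ := by
    have h1 := congrFun hbI ⟨i, Nat.lt_succ_of_le hi⟩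
    have h2 := congrFun hb'I ⟨i, Nat.lt_succ_of_le hi⟩
    rw [idxF] at h1 h2
    simp only at h1 h2
    rw [h1, h2]
  have := osc_of_floor_eq (y := b i + (r+1)) (y' := b' i + (r+1))
    (by have := (abs_le.mp hbi).1; linarith) (by have := (abs_le.mp hb'i).1; linarith) t heq
  simpa using this

lemma pieceS_nested {t : ℕ} {u : Fin (t+2) → ℕ} :
    pieceS r P (t+1) u ⊆ pieceS r P t (parF u) := by
  rintro b ⟨hbB, hbI⟩
  exact ⟨hbB, by rw [← hbI, parF_idxF]⟩

end Defs

section ExistsH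

open MeasureTheory

theorem exists_H {r : ℝ} (hr : 0 ≤ r) (P : ℕ → ℕ → ℝ) (hP : ∀ t i, |P t i| ≤ r)
    (k : ℕ → ℕ) (w : ∀ n, Fin (k n) → ℝ) (hw0 : ∀ n j, 0 ≤ w n j)
    (hw1 : ∀ n, ∑ j, w n j = 1) (τ : ∀ n, Fin (k n) → ℕ) :
    ∃ (ι : ℕ → ℕ) (H : ℕ → ℝ → ℝ), StrictMono ι ∧
      (∀ i, Measurable (H i)) ∧
      (∀ i s, |H i s| ≤ r) ∧
      (∀ s ∈ Set.Ico (0:ℝ) 1, (fun i => H i s) ∈ Bset P) ∧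
      (∀ i : ℕ, Tendsto (fun m => ∑ j, w (ι m) j * P (τ (ι m) j) i) atTop
        (𝓝 (∫ s in Set.Ico (0:ℝ) 1, H i s))) := by
  classical
  set mwt : ℕ → (t : ℕ) → (Fin (t+1) → ℕ) → ℝ :=
    fun n t u => ∑ j, if idxF r (P (τ n j)) t = u then w n j else 0 with hmwt
  have hatombd : ∀ n (j : Fin (k n)) i, |P (τ n j) i| ≤ r := fun n j i => hP _ i
  have hatomRt : ∀ n (j : Fin (k n)) t, idxF r (P (τ n j)) t ∈ Rt r t :=
    fun n j t => idxF_mem_Rt hr (hatombd n j) t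
  have hm0 : ∀ n t u, 0 ≤ mwt n t u := fun n t u =>
    Finset.sum_nonneg fun j _ => by split <;> simp [hw0 n j]
  have hm1 : ∀ n t u, mwt n t u ≤ 1 := fun n t u => by
    rw [hmwt, ← hw1 n]
    apply Finset.sum_le_sum
    intro j _
    split <;> simp [hw0 n j]
  have hmtot : ∀ n t, ∑ u ∈ Rt r t, mwt n t u = 1 := by
    intro n t
    rw [hmwt, ← hw1 n]
    rw [Finset.sum_comm]
    apply Finset.sum_congr rfl
    intro j _
    rw [Finset.sum_ite_eq (Rt r t) (idxF r (P (τ n j)) t) (fun _ => w n j)]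
    simp [hatomRt n j t]
  have hmchild : ∀ n t u, ∑ u' ∈ (Rt r (t+1)).filter (fun v => parF v = u),
      mwt n (t+1) u' = mwt n t u := by
    intro n t u
    rw [hmwt]
    rw [Finset.sum_comm]
    apply Finset.sum_congr rfl
    intro j _
    rw [Finset.sum_ite_eq ((Rt r (t+1)).filter (fun v => parF v = u))
      (idxF r (P (τ n j)) (t+1)) (fun _ => w n j)]
    simp only [Finset.mem_filter, hatomRt n j (t+1), true_and, parF_idxF]
  -- extraction of the subsequence
  set QI := (Σ t : ℕ, (Fin (t+1) → ℕ)) with hQI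
  have hcomp : IsCompact (Set.pi Set.univ fun _ : QI => Set.Icc (0:ℝ) 1) :=
    isCompact_univ_pi fun _ => isCompact_Icc
  have hvalmem : ∀ n, (fun q : QI => mwt n q.1 q.2) ∈ Set.pi Set.univ fun _ => Set.Icc (0:ℝ) 1 :=
    fun n => by
      rw [Set.mem_pi]
      exact fun q _ => ⟨hm0 n q.1 q.2, hm1 n q.1 q.2⟩
  obtain ⟨cf, hcfmem, ι, hι, hconv⟩ := hcomp.tendsto_subseq hvalmem
  set c : (t : ℕ) → (Fin (t+1) → ℕ) → ℝ := fun t u => cf ⟨t, u⟩ with hcdef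
  have hc : ∀ t u, Tendsto (fun m => mwt (ι m) t u) atTop (𝓝 (c t u)) := by
    intro t u
    exact (tendsto_pi_nhds.mp hconv) ⟨t, u⟩
  have hc0 : ∀ t u, 0 ≤ c t u := by
    intro t u
    rw [Set.mem_pi] at hcfmem
    exact (hcfmem ⟨t, u⟩ trivial).1
  have hctot : ∀ t, ∑ u ∈ Rt r t, c t u = 1 := by
    intro t
    have h1 : Tendsto (fun m => ∑ u ∈ Rt r t, mwt (ι m) t u) atTop
        (𝓝 (∑ u ∈ Rt r t, c t u)) := tendsto_finset_sum _ fun u _ => hc t u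
    have h2 : (fun m => ∑ u ∈ Rt r t, mwt (ι m) t u) = fun _ => 1 := by
      funext m; exact hmtot (ι m) t
    rw [h2] at h1
    exact tendsto_nhds_unique h1 tendsto_const_nhds
  have hcchild : ∀ t u, ∑ u' ∈ (Rt r (t+1)).filter (fun v => parF v = u), c (t+1) u'
      = c t u := by
    intro t u
    have h1 : Tendsto (fun m => ∑ u' ∈ (Rt r (t+1)).filter (fun v => parF v = u),
        mwt (ι m) (t+1) u') atTop
        (𝓝 (∑ u' ∈ (Rt r (t+1)).filter (fun v => parF v = u), c (t+1) u')) :=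
      tendsto_finset_sum _ fun u' _ => hc (t+1) u'
    have h2 : (fun m => ∑ u' ∈ (Rt r (t+1)).filter (fun v => parF v = u),
        mwt (ι m) (t+1) u') = fun m => mwt (ι m) t u := by
      funext m; exact hmchild (ι m) t u
    rw [h2] at h1
    exact tendsto_nhds_unique h1 (hc t u)
  -- start points of the dyadic intervals
  set α : (t : ℕ) → (Fin (t+1) → ℕ) → ℝ := fun t => Nat.rec
    (motive := fun t => (Fin (t+1) → ℕ) → ℝ)
    (fun u => ∑ u' ∈ before (Rt r 0) encF u, c 0 u')
    (fun t αt u => αt (parF u) +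
      ∑ u' ∈ before ((Rt r (t+1)).filter fun v => parF v = parF u) encF u, c (t+1) u') t
    with hαdef
  have hα0 : ∀ u, α 0 u = ∑ u' ∈ before (Rt r 0) encF u, c 0 u' := fun _ => rfl
  have hαs : ∀ t u, α (t+1) u = α t (parF u) +
      ∑ u' ∈ before ((Rt r (t+1)).filter fun v => parF v = parF u) encF u, c (t+1) u' :=
    fun _ _ => rfl
  have hα_nonneg : ∀ t u, 0 ≤ α t u := by
    intro t
    induction t with
    | zero =>
      intro u; rw [hα0]; exact Finset.sum_nonneg fun u' _ => hc0 0 u'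
    | succ t ih =>
      intro u; rw [hαs]
      exact add_nonneg (ih _) (Finset.sum_nonneg fun u' _ => hc0 _ u')
  have hchildsub : ∀ t (u : Fin (t+2) → ℕ), u ∈ Rt r (t+1) →
      α t (parF u) ≤ α (t+1) u ∧ α (t+1) u + c (t+1) u ≤ α t (parF u) + c t (parF u) := by
    intro t u hu
    have hsumnn : 0 ≤ ∑ u' ∈ before ((Rt r (t+1)).filter fun v => parF v = parF u) encF u,
        c (t+1) u' := Finset.sum_nonneg fun u' _ => hc0 _ u'
    constructor
    · rw [hαs]; linarith
    · rw [hαs]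
      have hunotin : u ∉ before ((Rt r (t+1)).filter fun v => parF v = parF u) encF u := by
        rw [before, Finset.mem_filter]
        rintro ⟨-, h⟩; exact lt_irrefl _ h
      have hsub : insert u (before ((Rt r (t+1)).filter fun v => parF v = parF u) encF u)
          ⊆ (Rt r (t+1)).filter fun v => parF v = parF u := by
        intro v hv
        rcases Finset.mem_insert.mp hv with rfl | hv
        · exact Finset.mem_filter.mpr ⟨hu, rfl⟩
        · exact Finset.mem_filter.mp hv |>.1
      have := Finset.sum_le_sum_of_subset_of_nonneg hsub
        (fun v _ _ => hc0 (t+1) v)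
      rw [Finset.sum_insert hunotin] at this
      rw [hcchild t (parF u)] at this
      linarith
  have hαc_le_one : ∀ t u, u ∈ Rt r t → α t u + c t u ≤ 1 := by
    intro t
    induction t with
    | zero =>
      intro u hu
      rw [hα0, ← hctot 0]
      have hunotin : u ∉ before (Rt r 0) encF u := by
        rw [before, Finset.mem_filter]; rintro ⟨-, h⟩; exact lt_irrefl _ h
      have hsub : insert u (before (Rt r 0) encF u) ⊆ Rt r 0 := by
        intro v hv
        rcases Finset.mem_insert.mp hv with rfl | hv
        · exact hu
        · exact Finset.mem_filter.mp hv |>.1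
      have := Finset.sum_le_sum_of_subset_of_nonneg hsub (fun v _ _ => hc0 0 v)
      rw [Finset.sum_insert hunotin] at this
      linarith
    | succ t ih =>
      intro u hu
      have h1 := (hchildsub t u hu).2
      have h2 := ih (parF u) (parF_mem_Rt hu)
      linarith
  -- existence and uniqueness of the straddling index
  have hstrad_ex : ∀ s : ℝ, s ∈ Set.Ico (0:ℝ) 1 → ∀ t,
      ∃ u, u ∈ Rt r t ∧ α t u ≤ s ∧ s < α t u + c t u := by
    intro s hs t
    induction t with
    | zero =>
      obtain ⟨u, hu, h1, h2⟩ := straddle (Rt r 0) (c 0) encF encF_inj.injOn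
        (fun u _ => hc0 0 u) (a := 0) hs.1 (by rw [hctot 0]; simpa using hs.2)
      exact ⟨u, hu, by rw [hα0]; linarith, by rw [hα0]; linarith⟩
    | succ t ih =>
      obtain ⟨v, hv, hv1, hv2⟩ := ih
      obtain ⟨u, hu, h1, h2⟩ := straddle ((Rt r (t+1)).filter fun x => parF x = v)
        (c (t+1)) encF encF_inj.injOn (fun u _ => hc0 _ u) (a := α t v) hv1
        (by rw [hcchild t v]; exact hv2)
      have hpar : parF u = v := (Finset.mem_filter.mp hu).2
      refine ⟨u, (Finset.mem_filter.mp hu).1, ?_, ?_⟩ <;> rw [hαs t u, hpar] <;> linarith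
  have hstrad_un : ∀ (s : ℝ) (t : ℕ) (u₁ u₂ : Fin (t+1) → ℕ), u₁ ∈ Rt r t → u₂ ∈ Rt r t →
      α t u₁ ≤ s → s < α t u₁ + c t u₁ → α t u₂ ≤ s → s < α t u₂ + c t u₂ → u₁ = u₂ := by
    intro s t
    induction t with
    | zero =>
      intro u₁ u₂ h1 h2 a1 b1 a2 b2
      rw [hα0] at a1 b1
      rw [hα0] at a2 b2
      exact straddle_unique (Rt r 0) (c 0) encF encF_inj.injOn (fun u _ => hc0 0 u)
        (a := 0) (s := s) h1 h2 (by linarith) (by linarith) (by linarith) (by linarith)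
    | succ t ih =>
      intro u₁ u₂ h1 h2 a1 b1 a2 b2
      have hp1 := hchildsub t u₁ h1
      have hp2 := hchildsub t u₂ h2
      have hpeq : parF u₁ = parF u₂ :=
        ih (parF u₁) (parF u₂) (parF_mem_Rt h1) (parF_mem_Rt h2)
          (by linarith) (by linarith) (by linarith) (by linarith)
      rw [hαs] at a1 b1 a2 b2
      rw [hpeq] at a1 b1
      exact straddle_unique ((Rt r (t+1)).filter fun v => parF v = parF u₂)
        (c (t+1)) encF encF_inj.injOn (fun u _ => hc0 _ u) (a := α t (parF u₂)) (s := s)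
        (Finset.mem_filter.mpr ⟨h1, hpeq⟩) (Finset.mem_filter.mpr ⟨h2, rfl⟩) a1 b1 a2 b2
  -- choice of points in nonempty pieces
  have hptex : ∀ (t : ℕ) (u : Fin (t+1) → ℕ), ∃ p : ℕ → ℝ,
      (pieceS r P t u).Nonempty → p ∈ pieceS r P t u := by
    intro t u
    by_cases h : (pieceS r P t u).Nonempty
    · exact ⟨h.choose, fun _ => h.choose_spec⟩
    · exact ⟨fun _ => 0, fun h' => absurd h' h⟩
  choose pt hpt using hptex
  have hcpos_ne : ∀ t u, 0 < c t u → (pieceS r P t u).Nonempty := by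
    intro t u hpos
    have hev : ∀ᶠ m in atTop, 0 < mwt (ι m) t u := (hc t u).eventually (lt_mem_nhds hpos)
    obtain ⟨m, hm⟩ := hev.exists
    have hne : mwt (ι m) t u ≠ 0 := ne_of_gt hm
    rw [hmwt] at hne
    obtain ⟨j, -, hj⟩ := Finset.exists_ne_zero_of_sum_ne_zero hne
    have hcond : idxF r (P (τ (ι m) j)) t = u := by
      by_contra hcc
      rw [if_neg hcc] at hj
      exact hj rfl
    exact ⟨P (τ (ι m) j), ⟨subset_closure ⟨τ (ι m) j, rfl⟩, hcond⟩⟩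
  -- the branch through the tree determined by a point s ∈ [0,1)
  have hubex : ∀ s : ℝ, ∃ ub : (t : ℕ) → (Fin (t+1) → ℕ), s ∈ Set.Ico (0:ℝ) 1 →
      ∀ t, ub t ∈ Rt r t ∧ α t (ub t) ≤ s ∧ s < α t (ub t) + c t (ub t) := by
    intro s
    by_cases hs : s ∈ Set.Ico (0:ℝ) 1
    · choose ubf hubf1 hubf2 using hstrad_ex s hs
      exact ⟨ubf, fun _ t => ⟨hubf1 t, hubf2 t⟩⟩
    · exact ⟨fun t _ => 0, fun hs' => absurd hs' hs⟩
  choose ub hubp using hubex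
  have hcoh : ∀ s, s ∈ Set.Ico (0:ℝ) 1 → ∀ t, parF (ub s (t+1)) = ub s t := by
    intro s hs t
    obtain ⟨hmem, hl, hr'⟩ := hubp s hs (t+1)
    obtain ⟨hmem0, hl0, hr0⟩ := hubp s hs t
    have hcs := hchildsub t _ hmem
    exact hstrad_un s t _ _ (parF_mem_Rt hmem) hmem0
      (by linarith [hcs.1]) (by linarith [hcs.2]) hl0 hr0
  have hnest0 : ∀ s, s ∈ Set.Ico (0:ℝ) 1 → ∀ t d,
      pieceS r P (t+d) (ub s (t+d)) ⊆ pieceS r P t (ub s t) := by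
    intro s hs t d
    induction d with
    | zero => exact subset_rfl
    | succ d ih =>
      intro b hb
      apply ih
      rw [← hcoh s hs (t+d)]
      exact pieceS_nested hb
  have hnest : ∀ s, s ∈ Set.Ico (0:ℝ) 1 → ∀ t t', t ≤ t' →
      pieceS r P t' (ub s t') ⊆ pieceS r P t (ub s t) := by
    intro s hs t t' htt'
    obtain ⟨d, rfl⟩ := Nat.exists_eq_add_of_le htt'
    exact hnest0 s hs t d
  have hptb : ∀ s, s ∈ Set.Ico (0:ℝ) 1 → ∀ t, pt t (ub s t) ∈ pieceS r P t (ub s t) := by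
    intro s hs t
    obtain ⟨hmem, hl, hr'⟩ := hubp s hs t
    exact hpt _ _ (hcpos_ne _ _ (by linarith))
  -- the approximating step functions
  set hco : ℕ → ℕ → ℝ → ℝ := fun t i s => ∑ u ∈ Rt r t,
    Set.indicator (Set.Ico (α t u) (α t u + c t u)) (fun _ => pt t u i) s with hhco
  have hco_eval : ∀ t i s, s ∈ Set.Ico (0:ℝ) 1 → hco t i s = pt t (ub s t) i := by
    intro t i s hs
    rw [hhco]
    dsimp only
    rw [Finset.sum_eq_single (ub s t)]
    · rw [Set.indicator_of_mem]
      exact ⟨(hubp s hs t).2.1, (hubp s hs t).2.2⟩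
    · intro u hu hne
      apply Set.indicator_of_notMem
      intro hmem
      exact hne (hstrad_un s t u (ub s t) hu (hubp s hs t).1 hmem.1 hmem.2
        (hubp s hs t).2.1 (hubp s hs t).2.2)
    · intro habs; exact absurd (hubp s hs t).1 habs
  have hco_zero : ∀ t i s, s ∉ Set.Ico (0:ℝ) 1 → hco t i s = 0 := by
    intro t i s hs
    rw [hhco]
    dsimp only
    apply Finset.sum_eq_zero
    intro u hu
    apply Set.indicator_of_notMem
    intro hmem
    exact hs ⟨le_trans (hα_nonneg t u) hmem.1, lt_of_lt_of_le hmem.2 (hαc_le_one t u hu)⟩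
  have hco_bdd : ∀ t i s, |hco t i s| ≤ r := by
    intro t i s
    by_cases hs : s ∈ Set.Ico (0:ℝ) 1
    · rw [hco_eval t i s hs]
      exact Bset_bound hP (hptb s hs t).1 i
    · rw [hco_zero t i s hs]; simpa using hr
  have hco_dist : ∀ i t t' s, i ≤ t → t ≤ t' → s ∈ Set.Ico (0:ℝ) 1 →
      |hco t' i s - hco t i s| ≤ (2:ℝ)⁻¹ ^ t := by
    intro i t t' s hi htt' hs
    rw [hco_eval _ _ _ hs, hco_eval _ _ _ hs]
    exact pieceS_osc hP hr (hnest s hs t t' htt' (hptb s hs t')) (hptb s hs t) hi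
  -- the limit function H
  have hcauchy : ∀ i s, ∃ L : ℝ, Tendsto (fun t => hco t i s) atTop (𝓝 L) := by
    intro i s
    by_cases hs : s ∈ Set.Ico (0:ℝ) 1
    · apply cauchySeq_tendsto_of_complete
      apply cauchySeq_of_le_tendsto_0 (b := fun N => if i ≤ N then (2:ℝ)⁻¹ ^ N else 2*r)
      · intro n m N hn hm
        by_cases hiN : i ≤ N
        · rw [if_pos hiN, Real.dist_eq]
          rcases le_total n m with h | h
          · rw [abs_sub_comm]
            calc |hco m i s - hco n i s| ≤ (2:ℝ)⁻¹ ^ n :=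
                  hco_dist i n m s (hiN.trans hn) h hs
            _ ≤ (2:ℝ)⁻¹ ^ N := pow_le_pow_of_le_one (by norm_num) (by norm_num) hn
          · calc |hco n i s - hco m i s| ≤ (2:ℝ)⁻¹ ^ m :=
                  hco_dist i m n s (hiN.trans hm) h hs
            _ ≤ (2:ℝ)⁻¹ ^ N := pow_le_pow_of_le_one (by norm_num) (by norm_num) hm
        · rw [if_neg hiN, Real.dist_eq]
          have h1 := hco_bdd n i s
          have h2 := hco_bdd m i s
          rw [abs_le] at h1 h2
          rw [abs_le]
          constructor <;> linarith
      · apply Tendsto.congr' (f₁ := fun N => (2:ℝ)⁻¹ ^ N)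
        · filter_upwards [eventually_ge_atTop i] with N hN
          rw [if_pos hN]
        · exact tendsto_pow_atTop_nhds_zero_of_lt_one (by norm_num) (by norm_num)
    · refine ⟨0, ?_⟩
      have : (fun t => hco t i s) = fun _ => 0 := funext fun t => hco_zero t i s hs
      rw [this]
      exact tendsto_const_nhds
  choose H hH using hcauchy
  -- measurability
  have hmeas_co : ∀ t i, Measurable (hco t i) := by
    intro t i
    rw [hhco]
    apply Finset.measurable_sum
    intro u hu
    exact measurable_const.indicator measurableSet_Ico
  have hmeas_H : ∀ i, Measurable (H i) := by
    intro i
    exact measurable_of_tendsto_metrizable (fun t => hmeas_co t i)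
      (tendsto_pi_nhds.mpr (fun s => hH i s))
  have hH_bdd : ∀ i s, |H i s| ≤ r := by
    intro i s
    exact le_of_tendsto (hH i s).abs (Eventually.of_forall fun t => hco_bdd t i s)
  have hH_mem : ∀ s ∈ Set.Ico (0:ℝ) 1, (fun i => H i s) ∈ Bset P := by
    intro s hs
    have htendsto : Tendsto (fun t => pt t (ub s t)) atTop (𝓝 (fun i => H i s)) := by
      rw [tendsto_pi_nhds]
      intro i
      exact (hH i s).congr (fun t => (hco_eval t i s hs))
    exact isClosed_closure.mem_of_tendsto htendsto
      (Eventually.of_forall fun t => (hptb s hs t).1)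
  have hH_dist : ∀ i t s, i ≤ t → s ∈ Set.Ico (0:ℝ) 1 →
      |H i s - hco t i s| ≤ (2:ℝ)⁻¹ ^ t := by
    intro i t s hi hs
    have h1 : Tendsto (fun t' => |hco t' i s - hco t i s|) atTop (𝓝 |H i s - hco t i s|) :=
      ((hH i s).sub tendsto_const_nhds).abs
    apply le_of_tendsto h1
    filter_upwards [eventually_ge_atTop t] with t' ht'
    exact hco_dist i t t' s hi ht' hs
  -- integrability
  have hvolfin : MeasureTheory.volume (Set.Ico (0:ℝ) 1) < ⊤ := by
    rw [Real.volume_Ico]; exact ENNReal.ofReal_lt_top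
  have hint_co_int : ∀ t i, MeasureTheory.IntegrableOn (hco t i) (Set.Ico (0:ℝ) 1) := by
    intro t i
    apply MeasureTheory.Integrable.mono' (g := fun _ => r)
      (MeasureTheory.integrableOn_const hvolfin.ne)
      ((hmeas_co t i).aestronglyMeasurable)
    exact Eventually.of_forall fun s => by rw [Real.norm_eq_abs]; exact hco_bdd t i s
  have hint_H_int : ∀ i, MeasureTheory.IntegrableOn (H i) (Set.Ico (0:ℝ) 1) := by
    intro i
    apply MeasureTheory.Integrable.mono' (g := fun _ => r)
      (MeasureTheory.integrableOn_const hvolfin.ne)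
      ((hmeas_H i).aestronglyMeasurable)
    exact Eventually.of_forall fun s => by rw [Real.norm_eq_abs]; exact hH_bdd i s
  -- integral of the step functions
  have hint_co : ∀ t i, ∫ s in Set.Ico (0:ℝ) 1, hco t i s = ∑ u ∈ Rt r t, c t u * pt t u i := by
    intro t i
    rw [hhco]
    dsimp only
    rw [MeasureTheory.integral_finset_sum _ (fun u hu =>
      (MeasureTheory.integrableOn_const (C := pt t u i) hvolfin.ne).indicator measurableSet_Ico)]
    apply Finset.sum_congr rfl
    intro u hu
    have hsub : Set.Ico (α t u) (α t u + c t u) ⊆ Set.Ico (0:ℝ) 1 := fun y hy =>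
      ⟨le_trans (hα_nonneg t u) hy.1, lt_of_lt_of_le hy.2 (hαc_le_one t u hu)⟩
    rw [MeasureTheory.setIntegral_indicator measurableSet_Ico]
    rw [MeasureTheory.setIntegral_const]
    rw [Set.inter_eq_self_of_subset_right hsub]
    rw [Real.volume_real_Ico_of_le (by linarith [hc0 t u]), add_sub_cancel_left, smul_eq_mul]
  -- main estimate: the weighted atom averages vs. the piece sums
  have havg : ∀ n t i, i ≤ t →
      |(∑ j, w n j * P (τ n j) i) - ∑ u ∈ Rt r t, mwt n t u * pt t u i| ≤ (2:ℝ)⁻¹ ^ t := by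
    intro n t i hi
    have hswap : ∑ u ∈ Rt r t, mwt n t u * pt t u i
        = ∑ j, w n j * pt t (idxF r (P (τ n j)) t) i := by
      rw [hmwt]
      dsimp only
      calc ∑ u ∈ Rt r t, (∑ j, if idxF r (P (τ n j)) t = u then w n j else 0) * pt t u i
          = ∑ u ∈ Rt r t, ∑ j, (if idxF r (P (τ n j)) t = u then w n j * pt t u i else 0) := by
            apply Finset.sum_congr rfl
            intro u hu
            rw [Finset.sum_mul]
            apply Finset.sum_congr rfl
            intro j _
            rw [ite_mul, zero_mul]
        _ = ∑ j, ∑ u ∈ Rt r t, (if idxF r (P (τ n j)) t = u then w n j * pt t u i else 0) :=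
            Finset.sum_comm
        _ = ∑ j, w n j * pt t (idxF r (P (τ n j)) t) i := by
            apply Finset.sum_congr rfl
            intro j _
            rw [Finset.sum_ite_eq (Rt r t) (idxF r (P (τ n j)) t)
              (fun u => w n j * pt t u i)]
            simp [hatomRt n j t]
    rw [hswap, ← Finset.sum_sub_distrib]
    have hterm : ∀ j : Fin (k n), |w n j * P (τ n j) i - w n j * pt t (idxF r (P (τ n j)) t) i|
        ≤ w n j * (2:ℝ)⁻¹ ^ t := by
      intro j
      rw [← mul_sub, abs_mul, abs_of_nonneg (hw0 n j)]
      apply mul_le_mul_of_nonneg_left _ (hw0 n j)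
      have hatom_mem : P (τ n j) ∈ pieceS r P t (idxF r (P (τ n j)) t) :=
        ⟨subset_closure ⟨τ n j, rfl⟩, rfl⟩
      have hpt_mem : pt t (idxF r (P (τ n j)) t) ∈ pieceS r P t (idxF r (P (τ n j)) t) :=
        hpt _ _ ⟨_, hatom_mem⟩
      exact pieceS_osc hP hr hatom_mem hpt_mem hi
    calc |∑ j, (w n j * P (τ n j) i - w n j * pt t (idxF r (P (τ n j)) t) i)|
        ≤ ∑ j, |w n j * P (τ n j) i - w n j * pt t (idxF r (P (τ n j)) t) i| :=
          Finset.abs_sum_le_sum_abs _ _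
      _ ≤ ∑ j, w n j * (2:ℝ)⁻¹ ^ t := Finset.sum_le_sum (fun j _ => hterm j)
      _ = (2:ℝ)⁻¹ ^ t := by rw [← Finset.sum_mul, hw1 n, one_mul]
  -- conclusion
  refine ⟨ι, H, hι, hmeas_H, hH_bdd, hH_mem, ?_⟩
  intro i
  rw [Metric.tendsto_atTop]
  intro ε hε
  obtain ⟨t, hti, ht⟩ : ∃ t, i ≤ t ∧ (2:ℝ)⁻¹ ^ t < ε/4 := by
    have h2 : Tendsto (fun t : ℕ => (2:ℝ)⁻¹ ^ t) atTop (𝓝 0) :=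
      tendsto_pow_atTop_nhds_zero_of_lt_one (by norm_num) (by norm_num)
    have h3 := (h2.eventually (gt_mem_nhds (by linarith : (0:ℝ) < ε/4))).and
      (eventually_ge_atTop i)
    obtain ⟨t, h4, h5⟩ := h3.exists
    exact ⟨t, h5, h4⟩
  have hsum_conv : Tendsto (fun m => ∑ u ∈ Rt r t, mwt (ι m) t u * pt t u i) atTop
      (𝓝 (∑ u ∈ Rt r t, c t u * pt t u i)) :=
    tendsto_finset_sum _ fun u _ => (hc t u).mul_const _
  obtain ⟨N, hN⟩ := (Metric.tendsto_atTop.mp hsum_conv) (ε/4) (by linarith)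
  refine ⟨N, fun m hm => ?_⟩
  have h1 := havg (ι m) t i hti
  have h2 := hN m hm
  rw [Real.dist_eq] at h2 ⊢
  have h3 : |(∫ s in Set.Ico (0:ℝ) 1, H i s) - ∑ u ∈ Rt r t, c t u * pt t u i|
      ≤ (2:ℝ)⁻¹ ^ t := by
    rw [← hint_co t i,
      ← MeasureTheory.integral_sub (hint_H_int i) (hint_co_int t i)]
    have hb : ∀ s ∈ Set.Ico (0:ℝ) 1, ‖H i s - hco t i s‖ ≤ (2:ℝ)⁻¹ ^ t := fun s hs => by
      rw [Real.norm_eq_abs]; exact hH_dist i t s hti hs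
    calc |∫ s in Set.Ico (0:ℝ) 1, (H i s - hco t i s)|
        ≤ (2:ℝ)⁻¹ ^ t * (MeasureTheory.volume (Set.Ico (0:ℝ) 1)).toReal := by
          rw [← Real.norm_eq_abs]
          exact MeasureTheory.norm_setIntegral_le_of_norm_le_const hvolfin hb
      _ = (2:ℝ)⁻¹ ^ t := by
          rw [Real.volume_Ico]
          norm_num
  have habs1 : |(∑ j, w (ι m) j * P (τ (ι m) j) i) - ∫ s in Set.Ico (0:ℝ) 1, H i s|
      ≤ |(∑ j, w (ι m) j * P (τ (ι m) j) i) - ∑ u ∈ Rt r t, mwt (ι m) t u * pt t u i|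
        + |(∑ u ∈ Rt r t, mwt (ι m) t u * pt t u i) - ∑ u ∈ Rt r t, c t u * pt t u i|
        + |(∑ u ∈ Rt r t, c t u * pt t u i) - ∫ s in Set.Ico (0:ℝ) 1, H i s| := by
    have := abs_sub_le ((∑ j, w (ι m) j * P (τ (ι m) j) i))
      (∑ u ∈ Rt r t, mwt (ι m) t u * pt t u i) (∫ s in Set.Ico (0:ℝ) 1, H i s)
    have h5 := abs_sub_le (∑ u ∈ Rt r t, mwt (ι m) t u * pt t u i)
      (∑ u ∈ Rt r t, c t u * pt t u i) (∫ s in Set.Ico (0:ℝ) 1, H i s)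
    linarith
  rw [abs_sub_comm] at h3
  linarith



end ExistsH

end IDLAux

open IDLAux MeasureTheory

/-- If a norm-bounded `A ⊆ C(X)` (with `X` compact) has the interchangeable
double limits property, then so does its convex hull. -/
theorem convexHull_interchangeable_double_limits {X : Type*} [TopologicalSpace X]
    [CompactSpace X] (A : Set C(X, ℝ))
    (hbdd : ∃ r : ℝ, ∀ f ∈ A, ∀ x : X, |f x| ≤ r)
    (hA : InterchangeableDoubleLimits A) :
    InterchangeableDoubleLimits (convexHull ℝ A) := by
  classical
  obtain ⟨r₀, hr₀⟩ := hbdd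
  set r := max r₀ 0 with hrdef
  have hr : 0 ≤ r := le_max_right _ _
  have hbd : ∀ f ∈ A, ∀ p : X, |f p| ≤ r := fun f hf p => (hr₀ f hf p).trans (le_max_left _ _)
  intro g hg x y z L₁ L₂ hgy hyL hgz hzL
  -- convex representation of each g n
  have hrep : ∀ n, ∃ (kn : ℕ) (wn : Fin kn → ℝ) (Fn : Fin kn → C(X, ℝ)),
      (∀ j, 0 ≤ wn j) ∧ (∑ j, wn j = 1) ∧ (∀ j, Fn j ∈ A) ∧
      (∀ p : X, g n p = ∑ j, wn j * Fn j p) := by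
    intro n
    obtain ⟨ι', hfin, w', z', hw0, hw1, hz, hsum⟩ :=
      mem_convexHull_iff_exists_fintype.mp (hg n)
    refine ⟨Fintype.card ι', w' ∘ (Fintype.equivFin ι').symm,
      z' ∘ (Fintype.equivFin ι').symm, fun j => hw0 _, ?_, fun j => hz _, ?_⟩
    · exact (Equiv.sum_comp (Fintype.equivFin ι').symm w').trans hw1
    · intro p
      have h1 := congrArg (fun f : C(X, ℝ) => f p) hsum
      rw [← h1]
      have h2 : (∑ i, w' i • z' i) p = ∑ i, w' i * z' i p := by simp
      rw [h2]
      exact (Equiv.sum_comp (Fintype.equivFin ι').symm (fun i => w' i * z' i p)).symm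
  choose kn wn Fn hw0 hw1 hFmem hgrep using hrep
  have hknpos : ∀ n, 0 < kn n := by
    intro n
    by_contra h
    push_neg at h
    have hk0 : kn n = 0 := Nat.le_zero.mp (Nat.lt_succ_iff.mp (Nat.lt_succ_of_le h))
    have := hw1 n
    rw [Finset.sum_eq_zero (fun j _ => absurd j.2 (by omega))] at this
    exact one_ne_zero this.symm
  -- enumeration of all the functions used
  haveI hne : Nonempty (Σ n : ℕ, Fin (kn n)) := ⟨⟨0, ⟨0, hknpos 0⟩⟩⟩
  obtain ⟨σf, hσf⟩ := exists_surjective_nat (Σ n : ℕ, Fin (kn n))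
  set sb : ℕ → C(X, ℝ) := fun tt => Fn (σf tt).1 (σf tt).2 with hsb
  have hsbA : ∀ tt, sb tt ∈ A := fun tt => hFmem _ _
  have hsb_sur : ∀ (n : ℕ) (j : Fin (kn n)), ∃ tt, sb tt = Fn n j := by
    intro n j
    obtain ⟨tt, htt⟩ := hσf ⟨n, j⟩
    exact ⟨tt, by rw [hsb]; simp only; rw [htt]⟩
  choose τf hτf using hsb_sur
  -- extraction 1 : a subsequence of x along which all sb converge
  have hΨmem : ∀ m, (fun tt => sb tt (x m)) ∈ Set.pi Set.univ (fun _ : ℕ => Set.Icc (-r) r) := by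
    intro m
    rw [Set.mem_pi]
    intro tt _
    rw [Set.mem_Icc, ← abs_le]
    exact hbd _ (hsbA tt) (x m)
  have hcomp : IsCompact (Set.pi Set.univ fun _ : ℕ => Set.Icc (-r) r) :=
    isCompact_univ_pi fun _ => isCompact_Icc
  obtain ⟨ω, hωmem, φ, hφ, hφconv⟩ := hcomp.tendsto_subseq hΨmem
  have hsbconv : ∀ tt, Tendsto (fun j => sb tt (x (φ j))) atTop (𝓝 (ω tt)) :=
    fun tt => (tendsto_pi_nhds.mp hφconv) tt
  -- the cluster point
  haveI : Nonempty X := ⟨x 0⟩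
  obtain ⟨x0, hx0⟩ := exists_clusterPt_of_compactSpace (Filter.map (fun j => x (φ j)) atTop)
  have hclust : ∀ (h : C(X, ℝ)) (cv : ℝ),
      Tendsto (fun j => h (x (φ j))) atTop (𝓝 cv) → h x0 = cv := by
    intro h cv hcv
    have h2 : (𝓝 x0 ⊓ Filter.map (fun j => x (φ j)) atTop).NeBot := hx0
    have h3 : Filter.map h (𝓝 x0 ⊓ Filter.map (fun j => x (φ j)) atTop)
        ≤ 𝓝 (h x0) ⊓ 𝓝 cv := by
      apply le_inf
      · exact le_trans (Filter.map_mono inf_le_left) h.continuous.continuousAt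
      · refine le_trans (Filter.map_mono inf_le_right) ?_
        rw [Filter.map_map]
        exact hcv
    exact eq_of_nhds_neBot (neBot_of_le h3)
  have hsbx0 : ∀ tt, sb tt x0 = ω tt := fun tt => hclust (sb tt) (ω tt) (hsbconv tt)
  have hgx0 : ∀ n, g n x0 = y n := fun n => hclust (g n) (y n) ((hgy n).comp hφ.tendsto_atTop)
  -- the sequence of sample points, with x0 in position 0
  set d : ℕ → X := fun i => Nat.rec x0 (fun j _ => x (φ j)) i with hd
  have hd0 : d 0 = x0 := rfl
  have hds : ∀ j, d (j+1) = x (φ j) := fun j => rfl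
  set Pf : ℕ → ℕ → ℝ := fun tt i => sb tt (d i) with hPf
  have hPfbd : ∀ tt i, |Pf tt i| ≤ r := fun tt i => hbd _ (hsbA tt) _
  obtain ⟨ι, H, hι, hmeasH, hHbdd, hHmem, hHconv⟩ := exists_H hr Pf hPfbd kn wn hw0 hw1 τf
  -- identification of the limits of the weighted averages
  have havg_eq : ∀ n i, (∑ j, wn n j * Pf (τf n j) i) = g n (d i) := by
    intro n i
    rw [hgrep n (d i)]
    apply Finset.sum_congr rfl
    intro j _
    congr 1
    rw [hPf]
    simp only
    rw [hτf n j]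
  have hint1 : ∀ i, Tendsto (fun m => g (ι m) (d i)) atTop
      (𝓝 (∫ s in Set.Ico (0:ℝ) 1, H i s)) := by
    intro i
    exact (hHconv i).congr (fun m => havg_eq (ι m) i)
  have hz_eq : ∀ j, z (φ j) = ∫ s in Set.Ico (0:ℝ) 1, H (j+1) s := by
    intro j
    have h1 : Tendsto (fun m => g (ι m) (x (φ j))) atTop (𝓝 (z (φ j))) :=
      (hgz (φ j)).comp hι.tendsto_atTop
    have h2 := hint1 (j+1)
    rw [hds j] at h2
    exact tendsto_nhds_unique h1 h2
  have hL1_eq : L₁ = ∫ s in Set.Ico (0:ℝ) 1, H 0 s := by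
    have h1 : Tendsto (fun m => g (ι m) x0) atTop (𝓝 L₁) :=
      (hyL.comp hι.tendsto_atTop).congr (fun m => (hgx0 (ι m)).symm)
    have h2 := hint1 0
    rw [hd0] at h2
    exact tendsto_nhds_unique h1 h2
  -- the pointwise convergence lemma, via the double limits property of A
  have hptwise : ∀ b ∈ Bset Pf, Tendsto (fun j => b (j+1)) atTop (𝓝 (b 0)) := by
    intro b hb
    obtain ⟨bs, hbs_mem, hbs_tend⟩ := mem_closure_iff_seq_limit.mp hb
    choose κ hκ using hbs_mem
    have hcoord : ∀ i, Tendsto (fun kk => sb (κ kk) (d i)) atTop (𝓝 (b i)) := by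
      intro i
      exact ((tendsto_pi_nhds.mp hbs_tend) i).congr
        (fun kk => (congrFun (hκ kk) i).symm)
    have hbbdd : ∀ i, |b i| ≤ r := fun i => Bset_bound hPfbd hb i
    apply tendsto_of_subseq_tendsto
    intro ns hns
    obtain ⟨cv, hcvmem, ms, hms, hcv⟩ := (isCompact_Icc (a := -r) (b := r)).tendsto_subseq
      (x := fun l => b (ns l + 1))
      (fun l => by rw [Set.mem_Icc, ← abs_le]; exact hbbdd _)
    refine ⟨ms, ?_⟩
    have hkey : b 0 = cv := by
      apply hA (fun kk => sb (κ kk)) (fun kk => hsbA (κ kk))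
        (fun l => x (φ (ns (ms l))))
        (fun kk => sb (κ kk) x0) (fun l => b (ns (ms l) + 1)) (b 0) cv
      · intro kk
        have hbase : Tendsto (fun j => sb (κ kk) (x (φ j))) atTop (𝓝 (sb (κ kk) x0)) := by
          rw [hsbx0 (κ kk)]
          exact hsbconv (κ kk)
        exact hbase.comp (hns.comp hms.tendsto_atTop)
      · have h0 := hcoord 0
        rw [hd0] at h0
        exact h0
      · intro l
        have hl := hcoord (ns (ms l) + 1)
        rw [hds] at hl
        exact hl
      · exact hcv
    rw [hkey]
    exact hcv
  -- dominated convergence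
  have hDCT : Tendsto (fun j => ∫ s in Set.Ico (0:ℝ) 1, H (j+1) s) atTop
      (𝓝 (∫ s in Set.Ico (0:ℝ) 1, H 0 s)) := by
    apply MeasureTheory.tendsto_integral_of_dominated_convergence (bound := fun _ => r)
    · intro j
      exact (hmeasH (j+1)).aestronglyMeasurable
    · exact MeasureTheory.integrableOn_const
        ((by rw [Real.volume_Ico]; exact ENNReal.ofReal_ne_top))
    · intro j
      exact Eventually.of_forall fun s => by rw [Real.norm_eq_abs]; exact hHbdd _ s
    · filter_upwards [MeasureTheory.self_mem_ae_restrict measurableSet_Ico] with s hs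
      exact hptwise _ (hHmem s hs)
  have hzL' : Tendsto (fun j => z (φ j)) atTop (𝓝 L₂) := hzL.comp hφ.tendsto_atTop
  have hfin : Tendsto (fun j => z (φ j)) atTop (𝓝 (∫ s in Set.Ico (0:ℝ) 1, H 0 s)) :=
    hDCT.congr (fun j => (hz_eq j).symm)
  rw [hL1_eq]
  exact tendsto_nhds_unique hfin hzL'
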